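/- In a finite binary-action supermodular game, if y is reachable from x by a monotone improvement path and x' ≥ x, then the supremum y ∨ x' is reachable from x' by a monotone improvement path. -/

import Mathlib

variable {V : Type*} [Fintype V] [DecidableEq V]

/-- A configuration assigns each player an action in `{-1, +1}` (as integers). -/
def Conf (x : V → ℤ) : Prop := ∀ i, x i = 1 ∨ x i = -1

/-- Supermodularity (increasing differences) for a binary-action game with
utilities `u`. -/
def Supermodular (u : V → (V → ℤ) → ℝ) : Prop :=
  ∀ (i : V) (x y : V → ℤ), Conf x → Conf y → (∀ j, j ≠ i → y j ≤ x j) →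
    u i (Function.update y i 1) - u i (Function.update y i (-1)) ≤
      u i (Function.update x i 1) - u i (Function.update x i (-1))

/-- One step of an improvement path: a single player flips her action and
strictly increases her utility. -/
def ImpStep (u : V → (V → ℤ) → ℝ) (x y : V → ℤ) : Prop :=
  ∃ i : V, y = Function.update x i (-(x i)) ∧ u i x < u i y

/-- A monotone improvement step (the active player switches from -1 to +1). -/
def MonStep (u : V → (V → ℤ) → ℝ) (x y : V → ℤ) : Prop :=
  ImpStep u x y ∧ x ≤ y

/-- An anti-monotone improvement step (the active player switches from +1 to -1). -/
def AntiStep (u : V → (V → ℤ) → ℝ) (x y : V → ℤ) : Prop :=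
  ImpStep u x y ∧ y ≤ x

/-- `y` is reachable from `x` by an improvement path. -/
def ImpReach (u : V → (V → ℤ) → ℝ) : (V → ℤ) → (V → ℤ) → Prop :=
  Relation.ReflTransGen (ImpStep u)

/-- `y` is reachable from `x` by a monotone improvement path. -/
def MonReach (u : V → (V → ℤ) → ℝ) : (V → ℤ) → (V → ℤ) → Prop :=
  Relation.ReflTransGen (MonStep u)

/-- `y` is reachable from `x` by an anti-monotone improvement path. -/
def AntiReach (u : V → (V → ℤ) → ℝ) : (V → ℤ) → (V → ℤ) → Prop :=
  Relation.ReflTransGen (AntiStep u)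

/-- `x` is a (pure strategy Nash) equilibrium: no unilateral flip strictly
improves the deviator's utility. -/
def IsNash (u : V → (V → ℤ) → ℝ) (x : V → ℤ) : Prop :=
  ∀ i : V, u i (Function.update x i (-(x i))) ≤ u i x

open Classical in
/-- `fplus u x` is the componentwise supremum of the set of configurations
reachable from `x` by monotone improvement paths. -/
noncomputable def fplus (u : V → (V → ℤ) → ℝ) (x : V → ℤ) : V → ℤ :=
  fun i => if ∃ y, MonReach u x y ∧ y i = 1 then 1 else -1

open Classical in
/-- `fminus u x` is the componentwise infimum of the set of configurations
reachable from `x` by anti-monotone improvement paths. -/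
noncomputable def fminus (u : V → (V → ℤ) → ℝ) (x : V → ℤ) : V → ℤ :=
  fun i => if ∃ y, AntiReach u x y ∧ y i = -1 then -1 else 1

lemma conf_impStep {u : V → (V → ℤ) → ℝ} {a b : V → ℤ} (ha : Conf a)
    (h : ImpStep u a b) : Conf b := by
  obtain ⟨i, hb, -⟩ := h
  subst hb
  intro j
  by_cases hj : j = i
  · subst hj
    simp only [Function.update_self]
    rcases ha j with h | h <;> simp [h]
  · simp only [Function.update_of_ne hj]
    exact ha j

lemma conf_monReach {u : V → (V → ℤ) → ℝ} {a b : V → ℤ} (ha : Conf a)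
    (h : MonReach u a b) : Conf b := by
  induction h with
  | refl => exact ha
  | tail _ hstep ih => exact conf_impStep ih hstep.1

lemma conf_sup {a b : V → ℤ} (ha : Conf a) (hb : Conf b) : Conf (a ⊔ b) := by
  intro i
  rcases ha i with h | h <;> rcases hb i with h' | h' <;>
    simp [Max.max, h, h']

/-- if `y` is reachable from `x` by a monotone improvement path
and `x' ≥ x`, then `y ⊔ x'` is reachable from `x'` by a monotone improvement
path. -/
theorem monReach_of_ge (u : V → (V → ℤ) → ℝ) (hsm : Supermodular u)
    (x y x' : V → ℤ) (hx : Conf x) (hx' : Conf x')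
    (hxy : MonReach u x y) (hle : x ≤ x') :
    MonReach u x' (y ⊔ x') := by
  induction hxy with
  | refl =>
    have : x ⊔ x' = x' := sup_eq_right.mpr hle
    rw [this]; exact Relation.ReflTransGen.refl
  | @tail b c hxb hstep ih =>
    have hb : Conf b := conf_monReach hx hxb
    obtain ⟨⟨i, hc, hui⟩, hbc⟩ := hstep
    -- b i = -1, c i = 1
    have hbi : b i = -1 := by
      rcases hb i with h | h
      · exfalso
        have := hbc i
        rw [hc] at this
        simp [Function.update_self, h] at this
      · exact h
    have hci : c = Function.update b i 1 := by
      rw [hc, hbi]; norm_num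
    by_cases hx'i : x' i = 1
    · -- sup already 1 at i; c ⊔ x' = b ⊔ x'
      have : c ⊔ x' = b ⊔ x' := by
        funext j
        by_cases hj : j = i
        · subst hj
          simp [Max.max, hci, hx'i, hbi]
        · simp [Max.max, hci, Function.update_of_ne hj]
      rw [this]; exact ih
    · have hx'i' : x' i = -1 := (hx' i).resolve_left hx'i
      have hbs : Conf (b ⊔ x') := conf_sup hb hx'
      have hbsi : (b ⊔ x') i = -1 := by
        simp [Max.max, hbi, hx'i']
      have heq : c ⊔ x' = Function.update (b ⊔ x') i 1 := by
        funext j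
        by_cases hj : j = i
        · subst hj
          simp [Max.max, hci, hx'i']
        · simp [Max.max, hci, Function.update_of_ne hj]
      -- supermodularity gives improvement
      have hmono : ∀ j, j ≠ i → b j ≤ (b ⊔ x') j := fun j _ => le_sup_left
      have hsup := hsm i (b ⊔ x') b hbs hb hmono
      have hb1 : Function.update b i (-1) = b := by
        funext j
        by_cases hj : j = i
        · subst hj; simp [hbi]
        · simp [Function.update_of_ne hj]
      have hbs1 : Function.update (b ⊔ x') i (-1) = b ⊔ x' := by
        funext j
        by_cases hj : j = i
        · subst hj; simp [hbsi]
        · simp [Function.update_of_ne hj]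
      rw [hb1, hbs1, ← hci] at hsup
      have himp : u i (b ⊔ x') < u i (Function.update (b ⊔ x') i 1) := by
        linarith
      have hstep' : MonStep u (b ⊔ x') (c ⊔ x') := by
        refine ⟨⟨i, ?_, ?_⟩, ?_⟩
        · rw [heq, hbsi]; norm_num
        · rw [heq]; exact himp
        · rw [heq]
          intro j
          by_cases hj : j = i
          · subst hj
            simp [Function.update_self, hbsi]
          · simp [Function.update_of_ne hj]
      exact ih.tail hstep'
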